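/- Let ε ∈ (0, 3/4), λ > 0, ρ > 0, μ' > 0, L' > 0, n ≥ 1, C = 3L'/(λ(1−ε)) + 2, and let 0 < α ≤ ρ/(2L'). Let x_{i,k−1} ∈ ℝ^{d×r} (i ∈ [n]), x̄_{k−1} = (1/n)Σ_i x_{i,k−1}, ȳ_{k−1} = (1/n)Σ_i Λ_i(x_{i,k−1}), x̄_k = x̄_{k−1} − α ȳ_{k−1}. Assume: each Λ_i is L'-Lipschitz; the descent inequality 𝓛(x̄_k) ≤ 𝓛(x̄_{k−1}) + ⟨∇𝓛(x̄_{k−1}), x̄_k − x̄_{k−1}⟩ + (L'/2)‖x̄_k − x̄_{k−1}‖_F²; ⟨Λ(x̄_{k−1}), ∇𝓛(x̄_{k−1})⟩ ≥ ρ‖Λ(x̄_{k−1})‖_F²; ‖∇𝓛(x̄_{k−1})‖_F ≤ C‖Λ(x̄_{k−1})‖_F; and the pseudo gradient domination 𝓛(x̄_{k−1}) − 𝓛*_S ≤ (1/μ')‖Λ(x̄_{k−1})‖_F². Then 𝓛(x̄_k) − 𝓛*_S ≤ (1 − ραμ'/4)(𝓛(x̄_{k−1}) − 𝓛*_S) +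 (L'²α² + αL'C²/ρ)·(L'/n)·‖𝐱_{k−1} − 𝐱̄_{k−1}‖_F². -/

import Mathlib

open Matrix BigOperators Finset

noncomputable section

namespace DRFGT

/-- Frobenius inner product `⟨A, B⟩ = Tr (A Bᵀ)`. -/
def finner {m k : Type*} [Fintype m] [Fintype k] (A B : Matrix m k ℝ) : ℝ :=
  Matrix.trace (A * Bᵀ)

/-- Frobenius norm `‖A‖_F = √⟨A, A⟩`. -/
def fnorm {m k : Type*} [Fintype m] [Fintype k] (A : Matrix m k ℝ) : ℝ :=
  Real.sqrt (finner A A)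

/-- Skew part of a square matrix, `skew(A) = (A − Aᵀ)/2`. -/
def mskew {m : Type*} [Fintype m] (A : Matrix m m ℝ) : Matrix m m ℝ :=
  (2 : ℝ)⁻¹ • (A - Aᵀ)

/-- Symmetric part of a square matrix, `sym(A) = (A + Aᵀ)/2`. -/
def msym {m : Type*} [Fintype m] (A : Matrix m m ℝ) : Matrix m m ℝ :=
  (2 : ℝ)⁻¹ • (A + Aᵀ)

/-- Relative (Riemannian) gradient `grad f(x) = skew(∇f(x) xᵀ) x`, where `Df` denotes the
Euclidean gradient `∇f` of `f`. -/
def rgrad {d r : ℕ} (Df : Matrix (Fin d) (Fin r) ℝ → Matrix (Fin d) (Fin r) ℝ)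
    (x : Matrix (Fin d) (Fin r) ℝ) : Matrix (Fin d) (Fin r) ℝ :=
  mskew (Df x * xᵀ) * x

/-- Landing field `Λ(x) = grad f(x) + λ x (xᵀ x − I_r)`. -/
def landing {d r : ℕ} (Df : Matrix (Fin d) (Fin r) ℝ → Matrix (Fin d) (Fin r) ℝ) (lam : ℝ)
    (x : Matrix (Fin d) (Fin r) ℝ) : Matrix (Fin d) (Fin r) ℝ :=
  rgrad Df x + lam • (x * (xᵀ * x - 1))

/-- The Stiefel manifold `St(d,r) = {x : xᵀ x = I_r}`. -/
def St (d r : ℕ) : Set (Matrix (Fin d) (Fin r) ℝ) := {x | xᵀ * x = 1}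

/-- The safety region `St(d,r)^ε = {x : ‖xᵀ x − I_r‖_F ≤ ε}`. -/
def StEps (d r : ℕ) (ε : ℝ) : Set (Matrix (Fin d) (Fin r) ℝ) :=
  {x | fnorm (xᵀ * x - 1) ≤ ε}

/-- The merit function `𝓛(x) = f(x) − ½⟨sym(xᵀ∇f(x)), xᵀx − I_r⟩ + γ·¼‖xᵀx − I_r‖_F²`. -/
def merit {d r : ℕ} (f : Matrix (Fin d) (Fin r) ℝ → ℝ)
    (Df : Matrix (Fin d) (Fin r) ℝ → Matrix (Fin d) (Fin r) ℝ) (γ : ℝ)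
    (x : Matrix (Fin d) (Fin r) ℝ) : ℝ :=
  f x - (2 : ℝ)⁻¹ * finner (msym (xᵀ * Df x)) (xᵀ * x - 1)
    + γ * (4 : ℝ)⁻¹ * fnorm (xᵀ * x - 1) ^ 2

/-- The gradient of the merit function at on-manifold points:
`∇𝓛(x) = ∇f(x) − x · sym(xᵀ∇f(x))` for `x ∈ St(d,r)`. -/
def meritGradSt {d r : ℕ} (Df : Matrix (Fin d) (Fin r) ℝ → Matrix (Fin d) (Fin r) ℝ)
    (x : Matrix (Fin d) (Fin r) ℝ) : Matrix (Fin d) (Fin r) ℝ :=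
  Df x - x * msym (xᵀ * Df x)

/-- `x'` is the polar factor of a full-column-rank `x`, i.e. the projection `Proj_St(x)` of `x`
onto the Stiefel manifold: if `x = U S Vᵀ` is a thin SVD then `x' = U Vᵀ`, equivalently
`x'ᵀ x' = I_r` and `x = x' P` for a positive definite `P` (namely `P = V S Vᵀ`). -/
def IsPolarFactor {d r : ℕ} (x x' : Matrix (Fin d) (Fin r) ℝ) : Prop :=
  x'ᵀ * x' = 1 ∧ ∃ P : Matrix (Fin r) (Fin r) ℝ, P.PosDef ∧ x = x' * P

/-- Frobenius distance from `x` to a set `S`: `dist(S,x) = inf_{y ∈ S} ‖x − y‖_F`. -/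
def fdist {d r : ℕ} (S : Set (Matrix (Fin d) (Fin r) ℝ)) (x : Matrix (Fin d) (Fin r) ℝ) : ℝ :=
  sInf ((fun y => fnorm (x - y)) '' S)

/-- Network average `z̄ = (1/n) Σᵢ zᵢ`. -/
def avg {n d r : ℕ} (z : Fin n → Matrix (Fin d) (Fin r) ℝ) : Matrix (Fin d) (Fin r) ℝ :=
  (n : ℝ)⁻¹ • ∑ i, z i

/-- Frobenius norm of a stacked family: `‖𝐳‖_F = (Σᵢ ‖zᵢ‖_F²)^{1/2}`. -/
def snorm {n d r : ℕ} (z : Fin n → Matrix (Fin d) (Fin r) ℝ) : ℝ :=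
  Real.sqrt (∑ i, fnorm (z i) ^ 2)



set_option maxHeartbeats 1000000

section auxlemmas
variable {m k : Type*} [Fintype m] [Fintype k]

/-- The obvious linear identification of matrices with Euclidean space. -/
def toE : Matrix m k ℝ →ₗ[ℝ] EuclideanSpace ℝ (m × k) where
  toFun A := WithLp.toLp 2 (fun p : m × k => A p.1 p.2)
  map_add' _ _ := rfl
  map_smul' _ _ := rfl

lemma finner_eq (A B : Matrix m k ℝ) : finner A B = inner ℝ (toE A) (toE B) := by
  simp [finner, Matrix.trace, Matrix.mul_apply, Matrix.diag, PiLp.inner_apply,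
    RCLike.inner_apply, toE, Fintype.sum_prod_type, LinearMap.coe_mk, AddHom.coe_mk, mul_comm]
  rfl

lemma fnorm_eq (A : Matrix m k ℝ) : fnorm A = ‖toE A‖ := by
  rw [fnorm, finner_eq, real_inner_self_eq_norm_sq, Real.sqrt_sq (norm_nonneg _)]

lemma fnorm_nonneg' (A : Matrix m k ℝ) : 0 ≤ fnorm A := Real.sqrt_nonneg _

/-- `W ↦ mskew (W * zᵀ) * z` as a linear map. -/
def Tmap {d r : ℕ} (z : Matrix (Fin d) (Fin r) ℝ) :
    Matrix (Fin d) (Fin r) ℝ →ₗ[ℝ] Matrix (Fin d) (Fin r) ℝ where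
  toFun W := mskew (W * zᵀ) * z
  map_add' A B := by
    simp [mskew, Matrix.add_mul, Matrix.transpose_add, Matrix.smul_mul, Matrix.sub_mul,
      smul_add, smul_sub]
    abel
  map_smul' c A := by
    simp only [mskew, Matrix.smul_mul, Matrix.transpose_smul, smul_sub, smul_smul,
      RingHom.id_apply, Matrix.sub_mul, mul_comm]

lemma landing_eq_Tmap {d r : ℕ} (Df : Matrix (Fin d) (Fin r) ℝ → Matrix (Fin d) (Fin r) ℝ)
    (lam : ℝ) (z : Matrix (Fin d) (Fin r) ℝ) :
    landing Df lam z = Tmap z (Df z) + lam • (z * (zᵀ * z - 1)) := rfl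

lemma sum_landing {n d r : ℕ} (hn : 0 < n)
    (Dfi : Fin n → Matrix (Fin d) (Fin r) ℝ → Matrix (Fin d) (Fin r) ℝ)
    (Df : Matrix (Fin d) (Fin r) ℝ → Matrix (Fin d) (Fin r) ℝ)
    (hDf : Df = fun z => (n : ℝ)⁻¹ • ∑ i, Dfi i z) (lam : ℝ)
    (z : Matrix (Fin d) (Fin r) ℝ) :
    ∑ i, landing (Dfi i) lam z = (n : ℝ) • landing Df lam z := by
  have hn' : (n : ℝ) ≠ 0 := Nat.cast_ne_zero.2 hn.ne'
  have hsumD : ∑ i, Dfi i z = (n : ℝ) • Df z := by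
    rw [hDf]; simp [smul_smul, mul_inv_cancel₀ hn']
  simp only [landing_eq_Tmap, Finset.sum_add_distrib, ← map_sum, hsumD, LinearMap.map_smul,
    Finset.sum_const, Finset.card_univ, Fintype.card_fin, smul_add]
  congr 1
  rw [← Nat.cast_smul_eq_nsmul ℝ]

end auxlemmas

/-- Purely scalar part of the contraction argument. -/
lemma scalar_step (ρ μ' L' α C LS M0 M1 P Eb Y I S nn : ℝ)
    (hρ : 0 < ρ) (hμ' : 0 < μ') (hL' : 0 < L') (hα : 0 < α) (hnn : 0 < nn)
    (key5 : L' * α ≤ ρ / 2)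
    (hY0 : 0 ≤ Y)
    (hdescent : M1 ≤ M0 - α * I + L' / 2 * (α ^ 2 * Y ^ 2))
    (hIlow : ρ * P ^ 2 - C * P * Eb ≤ I)
    (htri : Y ≤ P + Eb)
    (hEbsq : Eb ^ 2 ≤ L' ^ 2 / nn * S ^ 2)
    (hdom : M0 - LS ≤ 1 / μ' * P ^ 2) :
    M1 - LS ≤ (1 - ρ * α * μ' / 4) * (M0 - LS)
      + (L' ^ 2 * α ^ 2 + α * L' * C ^ 2 / ρ) * (L' / nn) * S ^ 2 := by
  have hc0 : 0 ≤ α * (C ^ 2 / ρ) + L' * α ^ 2 := by positivity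
  have keyYoung : C * P * Eb ≤ ρ / 4 * P ^ 2 + C ^ 2 / ρ * Eb ^ 2 := by
    have h1 : C * P * Eb ≤ (ρ ^ 2 * P ^ 2 + 4 * C ^ 2 * Eb ^ 2) / (4 * ρ) := by
      rw [le_div_iff₀ (by positivity)]
      nlinarith [sq_nonneg (ρ * P - 2 * C * Eb)]
    have h2 : (ρ ^ 2 * P ^ 2 + 4 * C ^ 2 * Eb ^ 2) / (4 * ρ)
        = ρ / 4 * P ^ 2 + C ^ 2 / ρ * Eb ^ 2 := by field_simp
    linarith
  have keyY : Y ^ 2 ≤ 2 * P ^ 2 + 2 * Eb ^ 2 := by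
    nlinarith [sq_nonneg (P - Eb), pow_le_pow_left₀ hY0 htri 2]
  have e4 : L' * α ^ 2 * P ^ 2 ≤ ρ / 2 * α * P ^ 2 := by
    nlinarith [mul_le_mul_of_nonneg_right key5 (mul_nonneg hα.le (sq_nonneg P))]
  have step1 : M1 ≤ M0 - ρ * α / 4 * P ^ 2 + (α * (C ^ 2 / ρ) + L' * α ^ 2) * Eb ^ 2 := by
    linarith [hdescent, mul_le_mul_of_nonneg_left hIlow hα.le,
      mul_le_mul_of_nonneg_left keyY (by positivity : (0:ℝ) ≤ L' / 2 * α ^ 2),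
      mul_le_mul_of_nonneg_left keyYoung hα.le, e4]
  have step2 : ρ * α * μ' / 4 * (M0 - LS) ≤ ρ * α / 4 * P ^ 2 := by
    have h := mul_le_mul_of_nonneg_left hdom (by positivity : (0:ℝ) ≤ ρ * α * μ' / 4)
    have h2 : ρ * α * μ' / 4 * (1 / μ' * P ^ 2) = ρ * α / 4 * P ^ 2 := by field_simp
    linarith
  have step3 : (α * (C ^ 2 / ρ) + L' * α ^ 2) * Eb ^ 2
      ≤ (L' ^ 2 * α ^ 2 + α * L' * C ^ 2 / ρ) * (L' / nn) * S ^ 2 := by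
    have h := mul_le_mul_of_nonneg_left hEbsq hc0
    have h2 : (α * (C ^ 2 / ρ) + L' * α ^ 2) * (L' ^ 2 / nn * S ^ 2)
        = (L' ^ 2 * α ^ 2 + α * L' * C ^ 2 / ρ) * (L' / nn) * S ^ 2 := by field_simp; ring
    linarith
  linarith [step1, step2, step3]

/-- one-step linear contraction under pseudo gradient domination, Lemma 7 of
the paper. With `0 < α ≤ ρ/(2L')`, `C = 3L'/(λ(1−ε)) + 2`, `gL = ∇𝓛(x̄_{k−1})`,
`ȳ_{k−1} = (1/n)Σᵢ Λᵢ(x_{i,k−1})` and `x̄_k = x̄_{k−1} − α ȳ_{k−1}`, the assumed descent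
inequality, merit/landing compatibility, gradient comparison and pseudo gradient domination
give
`𝓛(x̄_k) − 𝓛*_S ≤ (1 − ραμ'/4)(𝓛(x̄_{k−1}) − 𝓛*_S) + (L'²α² + αL'C²/ρ)(L'/n)‖𝐱_{k−1} − 𝐱̄_{k−1}‖²`. -/
theorem merit_linear_contraction {n d r : ℕ} (hn : 0 < n) (ε lam ρ μ' L' α γ C LS : ℝ)
    (hε : ε ∈ Set.Ioo (0 : ℝ) (3 / 4)) (hlam : 0 < lam) (hρ : 0 < ρ) (hμ' : 0 < μ')
    (hL' : 0 < L') (hα : 0 < α) (hαle : α ≤ ρ / (2 * L'))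
    (hCdef : C = 3 * L' / (lam * (1 - ε)) + 2)
    (fi : Fin n → Matrix (Fin d) (Fin r) ℝ → ℝ)
    (Dfi : Fin n → Matrix (Fin d) (Fin r) ℝ → Matrix (Fin d) (Fin r) ℝ)
    (f : Matrix (Fin d) (Fin r) ℝ → ℝ) (hf : f = fun z => (n : ℝ)⁻¹ * ∑ i, fi i z)
    (Df : Matrix (Fin d) (Fin r) ℝ → Matrix (Fin d) (Fin r) ℝ)
    (hDf : Df = fun z => (n : ℝ)⁻¹ • ∑ i, Dfi i z)
    (xp : Fin n → Matrix (Fin d) (Fin r) ℝ)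
    (gL : Matrix (Fin d) (Fin r) ℝ)
    (hLip : ∀ i, ∀ u v : Matrix (Fin d) (Fin r) ℝ,
      fnorm (landing (Dfi i) lam u - landing (Dfi i) lam v) ≤ L' * fnorm (u - v))
    (ybar : Matrix (Fin d) (Fin r) ℝ) (hybar : ybar = avg (fun i => landing (Dfi i) lam (xp i)))
    (xbarNext : Matrix (Fin d) (Fin r) ℝ) (hxbarNext : xbarNext = avg xp - α • ybar)
    (hdescent : merit f Df γ xbarNext ≤ merit f Df γ (avg xp)
      + finner gL (xbarNext - avg xp) + L' / 2 * fnorm (xbarNext - avg xp) ^ 2)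
    (hprop : finner (landing Df lam (avg xp)) gL ≥ ρ * fnorm (landing Df lam (avg xp)) ^ 2)
    (hC : fnorm gL ≤ C * fnorm (landing Df lam (avg xp)))
    (hdom : merit f Df γ (avg xp) - LS ≤ (1 / μ') * fnorm (landing Df lam (avg xp)) ^ 2) :
    merit f Df γ xbarNext - LS ≤
      (1 - ρ * α * μ' / 4) * (merit f Df γ (avg xp) - LS)
        + (L' ^ 2 * α ^ 2 + α * L' * C ^ 2 / ρ) * (L' / n)
          * snorm (fun i => xp i - avg xp) ^ 2 := by
  have hn' : (n : ℝ) ≠ 0 := Nat.cast_ne_zero.2 hn.ne'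
  have hnpos : (0:ℝ) < n := Nat.cast_pos.2 hn
  -- consensus error bound
  have hΛavg : landing Df lam (avg xp) = (n : ℝ)⁻¹ • ∑ i, landing (Dfi i) lam (avg xp) := by
    rw [sum_landing hn Dfi Df hDf, smul_smul, inv_mul_cancel₀ hn', one_smul]
  have hdiff : ybar - landing Df lam (avg xp)
      = (n : ℝ)⁻¹ • ∑ i, (landing (Dfi i) lam (xp i) - landing (Dfi i) lam (avg xp)) := by
    rw [hybar, avg, hΛavg, ← smul_sub, ← Finset.sum_sub_distrib]
  have hEb : fnorm (ybar - landing Df lam (avg xp))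
      ≤ L' / n * ∑ i, fnorm (xp i - avg xp) := by
    rw [hdiff, fnorm_eq, LinearMap.map_smul, map_sum, norm_smul]
    have h1 : ‖∑ i, toE (landing (Dfi i) lam (xp i) - landing (Dfi i) lam (avg xp))‖
        ≤ ∑ i, L' * fnorm (xp i - avg xp) := by
      refine (norm_sum_le _ _).trans (Finset.sum_le_sum fun i _ => ?_)
      rw [← fnorm_eq]
      exact hLip i _ _
    have h2 : ‖((n:ℝ)⁻¹ : ℝ)‖ = (n:ℝ)⁻¹ := by
      rw [Real.norm_eq_abs, abs_of_pos (by positivity)]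
    calc ‖((n:ℝ)⁻¹ : ℝ)‖ * ‖∑ i, toE (landing (Dfi i) lam (xp i) - landing (Dfi i) lam (avg xp))‖
        ≤ (n:ℝ)⁻¹ * ∑ i, L' * fnorm (xp i - avg xp) := by
          rw [h2]; exact mul_le_mul_of_nonneg_left h1 (by positivity)
      _ = L' / n * ∑ i, fnorm (xp i - avg xp) := by
          rw [← Finset.mul_sum]; field_simp
  have hEbsq : fnorm (ybar - landing Df lam (avg xp)) ^ 2
      ≤ L' ^ 2 / n * snorm (fun i => xp i - avg xp) ^ 2 := by
    have hSsq : snorm (fun i => xp i - avg xp) ^ 2 = ∑ i, fnorm (xp i - avg xp) ^ 2 := by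
      rw [snorm, Real.sq_sqrt (Finset.sum_nonneg fun i _ => sq_nonneg _)]
    have hcs : (∑ i, fnorm (xp i - avg xp)) ^ 2 ≤ n * ∑ i, fnorm (xp i - avg xp) ^ 2 := by
      have := sq_sum_le_card_mul_sum_sq (s := (univ : Finset (Fin n)))
        (f := fun i => fnorm (xp i - avg xp))
      simpa using this
    have h1 : fnorm (ybar - landing Df lam (avg xp)) ^ 2
        ≤ (L' / n * ∑ i, fnorm (xp i - avg xp)) ^ 2 :=
      pow_le_pow_left₀ (fnorm_nonneg' _) hEb 2
    calc fnorm (ybar - landing Df lam (avg xp)) ^ 2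
        ≤ (L' / n) ^ 2 * (∑ i, fnorm (xp i - avg xp)) ^ 2 := by rw [← mul_pow]; exact h1
      _ ≤ (L' / n) ^ 2 * (n * ∑ i, fnorm (xp i - avg xp) ^ 2) :=
          mul_le_mul_of_nonneg_left hcs (by positivity)
      _ = L' ^ 2 / n * snorm (fun i => xp i - avg xp) ^ 2 := by
          rw [hSsq]; field_simp
  -- descent rewriting
  have hxd : xbarNext - avg xp = -(α • ybar) := by rw [hxbarNext]; abel
  have hinner : finner gL (xbarNext - avg xp) = -(α * finner gL ybar) := by
    rw [hxd, finner_eq, finner_eq, map_neg, LinearMap.map_smul, inner_neg_right,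
      real_inner_smul_right]
  have hnorm : fnorm (xbarNext - avg xp) = α * fnorm ybar := by
    rw [hxd, fnorm_eq, fnorm_eq, map_neg, LinearMap.map_smul, norm_neg, norm_smul,
      Real.norm_eq_abs, abs_of_pos hα]
  have hdescent' : merit f Df γ xbarNext ≤ merit f Df γ (avg xp)
      - α * finner gL ybar + L' / 2 * (α ^ 2 * fnorm ybar ^ 2) := by
    rw [hinner, hnorm] at hdescent
    have h : (α * fnorm ybar) ^ 2 = α ^ 2 * fnorm ybar ^ 2 := by ring
    rw [h] at hdescent
    linarith
  -- inner product lower bound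
  have hIlow : ρ * fnorm (landing Df lam (avg xp)) ^ 2
      - C * fnorm (landing Df lam (avg xp)) * fnorm (ybar - landing Df lam (avg xp))
      ≤ finner gL ybar := by
    have hsplit : finner gL ybar
        = finner gL (landing Df lam (avg xp)) + finner gL (ybar - landing Df lam (avg xp)) := by
      rw [finner_eq, finner_eq, finner_eq, map_sub, inner_sub_right]; ring
    have hcomm : finner gL (landing Df lam (avg xp))
        = finner (landing Df lam (avg xp)) gL := by
      rw [finner_eq, finner_eq, real_inner_comm]
    have hCS : -(fnorm gL * fnorm (ybar - landing Df lam (avg xp)))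
        ≤ finner gL (ybar - landing Df lam (avg xp)) := by
      rw [finner_eq, fnorm_eq, fnorm_eq]
      have h1 := abs_real_inner_le_norm (toE gL) (toE (ybar - landing Df lam (avg xp)))
      have h2 := neg_abs_le (inner ℝ (toE gL) (toE (ybar - landing Df lam (avg xp))) : ℝ)
      linarith
    have h3 : fnorm gL * fnorm (ybar - landing Df lam (avg xp))
        ≤ C * fnorm (landing Df lam (avg xp)) * fnorm (ybar - landing Df lam (avg xp)) :=
      mul_le_mul_of_nonneg_right hC (fnorm_nonneg' _)
    linarith [hprop, hCS]
  have htri : fnorm ybar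
      ≤ fnorm (landing Df lam (avg xp)) + fnorm (ybar - landing Df lam (avg xp)) := by
    have h : ybar = landing Df lam (avg xp) + (ybar - landing Df lam (avg xp)) := by abel
    calc fnorm ybar = ‖toE (landing Df lam (avg xp)) + toE (ybar - landing Df lam (avg xp))‖ := by
          rw [fnorm_eq]; congr 1; rw [← map_add]; congr 1
      _ ≤ ‖toE (landing Df lam (avg xp))‖ + ‖toE (ybar - landing Df lam (avg xp))‖ :=
          norm_add_le _ _
      _ = _ := by rw [fnorm_eq, fnorm_eq]
  have key5 : L' * α ≤ ρ / 2 := by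
    rw [le_div_iff₀ (by positivity)] at hαle
    linarith
  exact scalar_step ρ μ' L' α C LS (merit f Df γ (avg xp)) (merit f Df γ xbarNext)
    (fnorm (landing Df lam (avg xp))) (fnorm (ybar - landing Df lam (avg xp)))
    (fnorm ybar) (finner gL ybar) (snorm (fun i => xp i - avg xp)) (n : ℝ)
    hρ hμ' hL' hα hnpos key5 (fnorm_nonneg' _) hdescent' hIlow htri hEbsq hdom


end DRFGT
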